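/- For any real payoff vectors P00, P01, P10, P11 ∈ ℝ² and any λ00, λ01, λ11 ≥ 0 with λ00 + λ01 + λ11 = 1 and λ01 < 1, the EWL payoff vector at the profile (U(0,0,0), U(2·arccos√(1−λ01), arccos√(λ00/(1−λ01)), 0)) equals λ00·P00 + λ01·P01 + λ11·P11. -/
import Mathlib


open Real

/-- The EWL payoff vector for a 2×2 bimatrix game with payoff vectors
`P00 P01 P10 P11 : ℝ × ℝ`, at the profile `(U(θ1,α1,β1), U(θ2,α2,β2))`. -/
noncomputable def ewlV (P00 P01 P10 P11 : ℝ × ℝ) (θ1 α1 β1 θ2 α2 β2 : ℝ) : ℝ × ℝ :=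
  ((cos (α1 + α2) * cos (θ1/2) * cos (θ2/2) +
    sin (β1 + β2) * sin (θ1/2) * sin (θ2/2))^2) • P00 +
  ((sin (α2 - β1) * sin (θ1/2) * cos (θ2/2) +
    cos (α1 - β2) * cos (θ1/2) * sin (θ2/2))^2) • P01 +
  ((cos (α2 - β1) * sin (θ1/2) * cos (θ2/2) +
    sin (α1 - β2) * cos (θ1/2) * sin (θ2/2))^2) • P10 +
  ((cos (β1 + β2) * sin (θ1/2) * sin (θ2/2) -
    sin (α1 + α2) * cos (θ1/2) * cos (θ2/2))^2) • P11

/-- A suitable two-parameter EWL strategy profile realizes any convex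
combination `λ00·P00 + λ01·P01 + λ11·P11` of three pure payoff vectors. -/
theorem ewl_convex_combination_00_01_11 (P00 P01 P10 P11 : ℝ × ℝ)
    (l00 l01 l11 : ℝ) (h00 : 0 ≤ l00) (h01 : 0 ≤ l01) (h11 : 0 ≤ l11)
    (hsum : l00 + l01 + l11 = 1) (hlt : l01 < 1) :
    ewlV P00 P01 P10 P11
      0 0 0
      (2 * Real.arccos (Real.sqrt (1 - l01)))
      (Real.arccos (Real.sqrt (l00 / (1 - l01)))) 0 =
      l00 • P00 + l01 • P01 + l11 • P11 := by
  have hpos : 0 < 1 - l01 := by linarith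
  have hle1 : Real.sqrt (1 - l01) ≤ 1 := Real.sqrt_le_one.mpr (by linarith)
  have hhalf : 2 * Real.arccos (Real.sqrt (1 - l01)) / 2
      = Real.arccos (Real.sqrt (1 - l01)) := by ring
  have hc2 : cos (Real.arccos (Real.sqrt (1 - l01))) = Real.sqrt (1 - l01) :=
    Real.cos_arccos (by linarith [Real.sqrt_nonneg (1 - l01)]) hle1
  have hs2 : sin (Real.arccos (Real.sqrt (1 - l01))) = Real.sqrt l01 := by
    rw [Real.sin_arccos, Real.sq_sqrt hpos.le]
    congr 1; ring
  have hrle : l00 / (1 - l01) ≤ 1 := by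
    rw [div_le_one hpos]; linarith
  have hrnn : 0 ≤ l00 / (1 - l01) := div_nonneg h00 hpos.le
  have hca : cos (Real.arccos (Real.sqrt (l00 / (1 - l01)))) = Real.sqrt (l00 / (1 - l01)) :=
    Real.cos_arccos (by linarith [Real.sqrt_nonneg (l00 / (1 - l01))])
      (Real.sqrt_le_one.mpr hrle)
  have hsa : sin (Real.arccos (Real.sqrt (l00 / (1 - l01)))) = Real.sqrt (l11 / (1 - l01)) := by
    rw [Real.sin_arccos, Real.sq_sqrt hrnn]
    congr 1; field_simp; linarith
  have e00 : (Real.sqrt (l00 / (1 - l01)) * Real.sqrt (1 - l01))^2 = l00 := by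
    rw [mul_pow, Real.sq_sqrt hrnn, Real.sq_sqrt hpos.le, div_mul_cancel₀ _ hpos.ne']
  have e01 : (Real.sqrt l01)^2 = l01 := Real.sq_sqrt h01
  have e11 : (Real.sqrt (l11 / (1 - l01)) * Real.sqrt (1 - l01))^2 = l11 := by
    rw [mul_pow, Real.sq_sqrt (div_nonneg h11 hpos.le), Real.sq_sqrt hpos.le,
      div_mul_cancel₀ _ hpos.ne']
  simp only [ewlV, hhalf]
  norm_num [hc2, hs2, hca, hsa]
  rw [e00, e01, e11]
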